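/- arXiv:1908.06808 — 2 statements merged into one kernel-verified Lean document; each statement's English description precedes it below -/
import Mathlib

section
/- Let p be a prime, z a complex number, G = (Z/qZ)^× with q coprime to p, G0 a subgroup of G, and H the cyclic subgroup of G generated by p mod q. Then ∏_{χ ∈ G0^⊥} (1 - χ(p)z) = (1 - z^{|HG0/G0|})^{|G/(HG0)|}, where G0^⊥ denotes the group of Dirichlet characters of G that are trivial on G0. -/
open Subgroup

section Aux

variable {Q : Type*} [CommGroup Q] [Finite Q]

noncomputable instance (priority := 100) finDual : Fintype (Q →* ℂˣ) :=
  @Fintype.ofFinite _ (Finite.of_equiv Q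
    (CommGroup.monoidHom_mulEquiv_of_hasEnoughRootsOfUnity Q ℂ).some.symm.toEquiv)

lemma card_dual (Q : Type*) [CommGroup Q] [Finite Q] :
    Nat.card (Q →* ℂˣ) = Nat.card Q :=
  Nat.card_congr (CommGroup.monoidHom_mulEquiv_of_hasEnoughRootsOfUnity Q ℂ).some.toEquiv

/-- Characters of `Q ⧸ N` correspond to characters of `Q` trivial on `N`. -/
noncomputable def dualQuotEquiv (N : Subgroup Q) :
    (Q ⧸ N →* ℂˣ) ≃ {φ : Q →* ℂˣ // ∀ g ∈ N, φ g = 1} where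
  toFun ψ := ⟨ψ.comp (QuotientGroup.mk' N), fun g hg => by
    simp [MonoidHom.comp_apply, (QuotientGroup.eq_one_iff g).mpr hg]⟩
  invFun φ := QuotientGroup.lift N φ.1 (fun g hg => φ.2 g hg)
  left_inv ψ := by
    ext x
    rfl
  right_inv φ := by ext g; rfl

lemma prod_nthRoots (d : ℕ) (hd : 0 < d) (z : ℂ) :
    ∏ ζ ∈ Polynomial.nthRootsFinset d (1 : ℂ), (1 - ζ * z) = 1 - z ^ d := by
  have hprim := Complex.isPrimitiveRoot_exp d hd.ne'
  have hpoly := Polynomial.X_pow_sub_one_eq_prod hd hprim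
  have hcard := hprim.card_nthRootsFinset
  rcases eq_or_ne z 0 with rfl | hz
  · simp [zero_pow hd.ne']
  · have := congrArg (Polynomial.eval z⁻¹) hpoly
    simp only [Polynomial.eval_pow, Polynomial.eval_sub, Polynomial.eval_one,
      Polynomial.eval_X, Polynomial.eval_prod, Polynomial.eval_C] at this
    have h3 : z ^ d * ∏ ζ ∈ Polynomial.nthRootsFinset d (1 : ℂ), (z⁻¹ - ζ)
        = ∏ ζ ∈ Polynomial.nthRootsFinset d (1 : ℂ), (1 - ζ * z) := by
      rw [show z ^ d = ∏ _ζ ∈ Polynomial.nthRootsFinset d (1 : ℂ), z by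
            rw [Finset.prod_const, hcard], ← Finset.prod_mul_distrib]
      exact Finset.prod_congr rfl fun ζ _ => by field_simp
    calc ∏ ζ ∈ Polynomial.nthRootsFinset d (1 : ℂ), (1 - ζ * z)
        = z ^ d * ∏ ζ ∈ Polynomial.nthRootsFinset d (1 : ℂ), (z⁻¹ - ζ) := h3.symm
      _ = z ^ d * (z⁻¹ ^ d - 1) := by rw [← this]
      _ = 1 - z ^ d := by
          rw [mul_sub, mul_one, ← mul_pow, mul_inv_cancel₀ hz, one_pow]

lemma prod_dual (a : Q) (z : ℂ) :
    ∏ ψ : Q →* ℂˣ, (1 - (ψ a : ℂ) * z)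
      = (1 - z ^ orderOf a) ^ (Nat.card Q / orderOf a) := by
  classical
  set d := orderOf a with hd
  have hd0 : 0 < d := orderOf_pos a
  set ev : (Q →* ℂˣ) →* ℂˣ :=
    { toFun := fun ψ => ψ a, map_one' := rfl, map_mul' := fun _ _ => rfl } with hev
  have hNpos : 0 < Nat.card Q := Nat.card_pos
  have hdvd : d ∣ Nat.card Q := orderOf_dvd_natCard a
  -- kernel cardinality
  have hkerequiv : (ev.ker : Type _) ≃ {φ : Q →* ℂˣ // ∀ g ∈ zpowers a, φ g = 1} :=
    Equiv.subtypeEquivRight fun φ => by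
      constructor
      · intro hφ g hg
        obtain ⟨k, rfl⟩ := hg
        have h1 : φ a = 1 := MonoidHom.mem_ker.mp hφ
        rw [map_zpow, h1, one_zpow]
      · intro h
        exact MonoidHom.mem_ker.mpr (h a (mem_zpowers a))
  have hker : Nat.card ev.ker = Nat.card Q / d := by
    have h1 : Nat.card ev.ker = Nat.card (Q ⧸ zpowers a) := by
      rw [Nat.card_congr hkerequiv, Nat.card_congr (dualQuotEquiv (zpowers a)).symm,
        card_dual]
    have h2 := Subgroup.card_mul_index (zpowers a)
    rw [Nat.card_zpowers] at h2
    rw [h1, ← Subgroup.index_eq_card, ← h2, ← hd, Nat.mul_div_cancel_left _ hd0]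
  -- range cardinality
  have hrange : Nat.card ev.range = d := by
    have h1 : Nat.card (Q →* ℂˣ) = Nat.card ev.range * Nat.card ev.ker := by
      rw [Subgroup.card_eq_card_quotient_mul_card_subgroup ev.ker]
      congr 1
      exact Nat.card_congr (QuotientGroup.quotientKerEquivRange ev).toEquiv
    rw [card_dual, hker] at h1
    have h2 : Nat.card Q = d * (Nat.card Q / d) := (Nat.mul_div_cancel' hdvd).symm
    have hq0 : 0 < Nat.card Q / d := Nat.div_pos (Nat.le_of_dvd hNpos hdvd) hd0
    exact Nat.eq_of_mul_eq_mul_right hq0 (by omega)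
  -- elements of the range are d-th roots of unity
  have hpow : ∀ w : ℂˣ, w ∈ ev.range → (w : ℂ) ^ d = 1 := by
    rintro w ⟨ψ, rfl⟩
    have h1 : (ψ a) ^ d = 1 := by rw [← map_pow, pow_orderOf_eq_one, map_one]
    show ((ψ a : ℂˣ) : ℂ) ^ d = 1
    rw [← Units.val_pow_eq_pow_val, h1, Units.val_one]
  -- group the product by fibers of `ev`
  rw [show (fun ψ : Q →* ℂˣ => (1 - (ψ a : ℂ) * z)) = fun ψ => (1 - (ev ψ : ℂ) * z) from rfl]
  rw [Finset.prod_comp (fun w : ℂˣ => (1 - (w : ℂ) * z)) ev]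
  -- fibers all have cardinality `Nat.card ev.ker`
  have hfiber : ∀ w ∈ Finset.univ.image ev,
      (Finset.univ.filter (fun ψ => ev ψ = w)).card = Nat.card Q / d := by
    intro w hw
    obtain ⟨ψ₀, -, rfl⟩ := Finset.mem_image.mp hw
    rw [← hker, Nat.card_eq_fintype_card, Fintype.card_subtype]
    apply Finset.card_bij (fun ψ _ => ψ₀⁻¹ * ψ)
    · intro ψ hψ
      have hψ' : ψ a = ψ₀ a := (Finset.mem_filter.mp hψ).2
      refine Finset.mem_filter.mpr ⟨Finset.mem_univ _, ?_⟩
      show ψ₀⁻¹ * ψ ∈ ev.ker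
      rw [MonoidHom.mem_ker]
      show (ψ₀ a)⁻¹ * ψ a = 1
      rw [hψ', inv_mul_cancel]
    · intro ψ₁ _ ψ₂ _ h
      ext x
      have h2 : (ψ₀ x)⁻¹ * ψ₁ x = (ψ₀ x)⁻¹ * ψ₂ x := DFunLike.congr_fun h x
      exact congrArg Units.val (mul_left_cancel h2)
    · intro φ hφ
      have hφ' : φ a = 1 := (Finset.mem_filter.mp hφ).2
      refine ⟨ψ₀ * φ, ?_, by
        ext x; exact congrArg Units.val (inv_mul_cancel_left (ψ₀ x) (φ x))⟩
      refine Finset.mem_filter.mpr ⟨Finset.mem_univ _, ?_⟩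
      show ψ₀ a * φ a = ψ₀ a
      rw [hφ', mul_one]
  rw [Finset.prod_congr rfl (fun w hw => by rw [hfiber w hw]), Finset.prod_pow]
  congr 1
  -- the image of `ev` is the set of d-th roots of unity
  have himg : (Finset.univ.image ev).image (Units.val) = Polynomial.nthRootsFinset d (1 : ℂ) := by
    apply Finset.eq_of_subset_of_card_le
    · intro ζ hζ
      simp only [Finset.mem_image, Finset.mem_univ, true_and] at hζ
      obtain ⟨w, ⟨ψ, -, rfl⟩, rfl⟩ := hζ
      exact (Polynomial.mem_nthRootsFinset hd0 (1 : ℂ)).mpr (hpow _ ⟨ψ, rfl⟩)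
    · rw [Finset.card_image_of_injective _ Units.val_injective,
        (Complex.isPrimitiveRoot_exp d hd0.ne').card_nthRootsFinset]
      have : (Finset.univ.image ev).card = Nat.card ev.range := by
        rw [Nat.card_eq_fintype_card, ← Fintype.card_coe (Finset.univ.image ev)]
        exact Fintype.card_congr (Equiv.subtypeEquivRight fun w => by
          simp [MonoidHom.mem_range, eq_comm])
      rw [this, hrange]
  rw [← prod_nthRoots d hd0 z, ← himg,
    Finset.prod_image (fun _ _ _ _ h => Units.ext h)]

end Aux

section Main

open QuotientGroup

set_option maxSynthPendingDepth 2

/-- For a prime `p` coprime to `q`, a subgroup `G0` of `G = (ZMod q)ˣ`, and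
`H = ⟨p mod q⟩`, one has `∏_{χ ∈ G0^⊥} (1 - χ(p) z) = (1 - z^{[HG0 : G0]})^{[G : HG0]}`. -/
theorem prod_characters_trivial_on_subgroup (q : ℕ) [NeZero q] (p : ℕ) (hp : p.Prime)
    (hpq : Nat.Coprime p q) (z : ℂ) (G0 : Subgroup (ZMod q)ˣ) :
    (∏ᶠ (χ : DirichletCharacter ℂ q) (_ : ∀ g : (ZMod q)ˣ, g ∈ G0 → χ g = 1),
        (1 - χ p * z))
      = (1 - z ^ (G0.relIndex (Subgroup.zpowers (ZMod.unitOfCoprime p hpq) ⊔ G0)))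
          ^ (Subgroup.zpowers (ZMod.unitOfCoprime p hpq) ⊔ G0).index := by
  classical
  set u := ZMod.unitOfCoprime p hpq with hu
  set K := zpowers u ⊔ G0 with hK
  haveI : Finite ((ZMod q)ˣ ⧸ G0) := Quotient.finite _
  haveI : NeZero (Monoid.exponent ((ZMod q)ˣ ⧸ G0)) :=
    ⟨Monoid.exponent_ne_zero.mpr (Monoid.ExponentExists.of_finite)⟩
  let P : DirichletCharacter ℂ q → Prop := fun χ => ∀ g : (ZMod q)ˣ, g ∈ G0 → χ g = 1
  -- Step 1: finprod to a product over a subtype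
  have step1 : (∏ᶠ (χ : DirichletCharacter ℂ q) (_ : P χ), (1 - χ p * z))
      = ∏ χ : {χ : DirichletCharacter ℂ q // P χ}, (1 - (χ : DirichletCharacter ℂ q) p * z) := by
    rw [finprod_cond_eq_prod_of_cond_iff _
        (t := Finset.univ.filter P) (fun {χ} _ => by simp [P])]
    exact Finset.prod_subtype _ (fun χ => by simp [P]) _
  -- Step 2: reindex by characters of the quotient
  let F : (((ZMod q)ˣ ⧸ G0) →* ℂˣ) → {χ : DirichletCharacter ℂ q // P χ} := fun ψ =>
    ⟨MulChar.equivToUnitHom.symm (ψ.comp (QuotientGroup.mk' G0)), fun g hg => by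
      rw [← MulChar.coe_equivToUnitHom, Equiv.apply_symm_apply]
      show ((ψ (QuotientGroup.mk g) : ℂˣ) : ℂ) = 1
      rw [(QuotientGroup.eq_one_iff g).mpr hg, map_one, Units.val_one]⟩
  have hFbij : Function.Bijective F := by
    constructor
    · intro ψ₁ ψ₂ h
      have h1 : ψ₁.comp (QuotientGroup.mk' G0) = ψ₂.comp (QuotientGroup.mk' G0) :=
        MulChar.equivToUnitHom.symm.injective (congrArg Subtype.val h)
      ext x
      exact congrArg Units.val (DFunLike.congr_fun h1 x)
    · rintro ⟨χ, hχ⟩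
      have hker : G0 ≤ (MulChar.equivToUnitHom χ).ker := fun g hg =>
        MonoidHom.mem_ker.mpr (Units.ext (by
          rw [MulChar.coe_equivToUnitHom, hχ g hg, Units.val_one]))
      refine ⟨QuotientGroup.lift G0 (MulChar.equivToUnitHom χ) hker, ?_⟩
      apply Subtype.ext
      show MulChar.equivToUnitHom.symm _ = χ
      rw [show (QuotientGroup.lift G0 (MulChar.equivToUnitHom χ) hker).comp
            (QuotientGroup.mk' G0) = MulChar.equivToUnitHom χ from rfl,
        Equiv.symm_apply_apply]
  have step2 : ∏ χ : {χ : DirichletCharacter ℂ q // P χ}, (1 - (χ : DirichletCharacter ℂ q) p * z)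
      = ∏ ψ : ((ZMod q)ˣ ⧸ G0) →* ℂˣ, (1 - ((ψ (QuotientGroup.mk u) : ℂˣ) : ℂ) * z) := by
    refine (Fintype.prod_bijective F hFbij _ _ fun ψ => ?_).symm
    congr 2
    have h1 : ((p : ZMod q)) = ((u : (ZMod q)ˣ) : ZMod q) := (ZMod.coe_unitOfCoprime p hpq).symm
    rw [h1, ← MulChar.coe_equivToUnitHom, Equiv.apply_symm_apply]
    rfl
  -- Step 3: the abstract product formula
  have step3 := prod_dual (QuotientGroup.mk u : (ZMod q)ˣ ⧸ G0) z
  -- Step 4: identify the order with the relative index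
  have hord : orderOf (QuotientGroup.mk u : (ZMod q)ˣ ⧸ G0) = G0.relIndex K := by
    rw [← Nat.card_zpowers]
    have hmap : zpowers (QuotientGroup.mk u : (ZMod q)ˣ ⧸ G0) = Subgroup.map (QuotientGroup.mk' G0) K := by
      have hbot : Subgroup.map (QuotientGroup.mk' G0) G0 = ⊥ :=
        (Subgroup.map_eq_bot_iff _).mpr (le_of_eq (QuotientGroup.ker_mk' G0).symm)
      rw [hK, Subgroup.map_sup, hbot, sup_bot_eq, MonoidHom.map_zpowers]
      rfl
    rw [hmap]
    have hker : ((QuotientGroup.mk' G0).comp K.subtype).ker = G0.subgroupOf K := by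
      rw [← MonoidHom.comap_ker, QuotientGroup.ker_mk']
      rfl
    have hrange : ((QuotientGroup.mk' G0).comp K.subtype).range
        = Subgroup.map (QuotientGroup.mk' G0) K := by
      rw [MonoidHom.range_comp, Subgroup.range_subtype]
    have e1 : (K ⧸ (G0.subgroupOf K)) ≃* Subgroup.map (QuotientGroup.mk' G0) K :=
      ((QuotientGroup.quotientMulEquivOfEq hker.symm).trans
        (QuotientGroup.quotientKerEquivRange _)).trans (MulEquiv.subgroupCongr hrange)
    rw [← Nat.card_congr e1.toEquiv, Subgroup.relIndex, Subgroup.index_eq_card]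
  -- Step 5: identify the exponent with the index
  have hexp : Nat.card ((ZMod q)ˣ ⧸ G0) / orderOf (QuotientGroup.mk u : (ZMod q)ˣ ⧸ G0) = K.index := by
    have hle : G0 ≤ K := le_sup_right
    have h1 : G0.relIndex K * K.index = G0.index := Subgroup.relIndex_mul_index hle
    have h2 : 0 < G0.relIndex K := by
      rw [← hord]; exact orderOf_pos (QuotientGroup.mk u : (ZMod q)ˣ ⧸ G0)
    rw [hord, ← Subgroup.index_eq_card, ← h1, Nat.mul_div_cancel_left _ h2]
  rw [step1, step2, step3, hexp, hord]

end Main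
end

section
/- Let n be a positive integer and for ℓ ≥ 0 let d_ℓ*(n) denote the number of ℓ-tuples (d_1,…,d_ℓ) of divisors of n with each d_i > 1 and d_1·d_2⋯d_ℓ = n. Then ∑_{ℓ ≥ 0} (-1)^ℓ d_ℓ*(n) = μ(n), the Möbius function of n. -/
/-- `dstar ℓ n` is the number of `ℓ`-tuples `(d_1, …, d_ℓ)` of divisors of `n`,
each `> 1`, whose product is `n`. -/
noncomputable def dstar (ℓ n : ℕ) : ℕ :=
  Nat.card {f : Fin ℓ → ℕ // (∀ i, f i ∣ n ∧ 1 < f i) ∧ ∏ i, f i = n}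

/-- The finset version of the counted set. -/
def dstarFinset (ℓ n : ℕ) : Finset (Fin ℓ → ℕ) :=
  (Fintype.piFinset fun _ : Fin ℓ => n.divisors).filter
    (fun f => (∀ i, f i ∣ n ∧ 1 < f i) ∧ ∏ i, f i = n)

lemma mem_dstarFinset {ℓ n : ℕ} (hn : n ≠ 0) {f : Fin ℓ → ℕ} :
    f ∈ dstarFinset ℓ n ↔ (∀ i, f i ∣ n ∧ 1 < f i) ∧ ∏ i, f i = n := by
  simp only [dstarFinset, Finset.mem_filter, Fintype.mem_piFinset, Nat.mem_divisors]
  constructor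
  · rintro ⟨-, h⟩; exact h
  · rintro ⟨h1, h2⟩; exact ⟨fun i => ⟨(h1 i).1, hn⟩, h1, h2⟩

lemma dstar_eq_card (ℓ n : ℕ) (hn : n ≠ 0) : dstar ℓ n = (dstarFinset ℓ n).card := by
  rw [dstar, ← Nat.card_eq_finsetCard]
  exact Nat.card_congr (Equiv.subtypeEquivRight fun f => (mem_dstarFinset hn).symm)

lemma dstar_zero (n : ℕ) : dstar 0 n = if n = 1 then 1 else 0 := by
  split_ifs with h
  · subst h
    have : Unique {f : Fin 0 → ℕ // (∀ i, f i ∣ 1 ∧ 1 < f i) ∧ ∏ i, f i = 1} :=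
      { default := ⟨fun i => i.elim0, by simp, by simp⟩
        uniq := fun f => Subtype.ext (funext fun i => i.elim0) }
    exact Nat.card_unique
  · have : IsEmpty {f : Fin 0 → ℕ // (∀ i, f i ∣ n ∧ 1 < f i) ∧ ∏ i, f i = n} := by
      constructor; rintro ⟨f, -, hf⟩
      simp at hf
      exact h hf.symm
    exact Nat.card_of_isEmpty

lemma dstar_eq_zero_of_le {ℓ n : ℕ} (hn : 1 ≤ n) (h : n ≤ ℓ) : dstar ℓ n = 0 := by
  have : IsEmpty {f : Fin ℓ → ℕ // (∀ i, f i ∣ n ∧ 1 < f i) ∧ ∏ i, f i = n} := by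
    constructor; rintro ⟨f, h1, h2⟩
    have h2pow : (2 : ℕ) ^ ℓ ≤ ∏ i, f i := by
      calc (2 : ℕ) ^ ℓ = ∏ _i : Fin ℓ, 2 := by simp
        _ ≤ ∏ i, f i := Finset.prod_le_prod' fun i _ => (h1 i).2
    have := Nat.lt_two_pow_self (n := n)
    have h2n : (2:ℕ) ^ n ≤ 2 ^ ℓ := Nat.pow_le_pow_right (by norm_num) h
    omega
  exact Nat.card_of_isEmpty

lemma dstar_succ (ℓ n : ℕ) (hn : n ≠ 0) :
    dstar (ℓ + 1) n
      = ∑ d ∈ n.divisors.filter (fun d => 1 < d), dstar ℓ (n / d) := by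
  rw [dstar_eq_card _ _ hn]
  rw [Finset.card_eq_sum_card_fiberwise
    (f := fun f : Fin (ℓ+1) → ℕ => f 0) (t := n.divisors.filter (fun d => 1 < d))
    (fun f hf => by
      rw [Finset.mem_coe, mem_dstarFinset hn] at hf
      exact Finset.mem_filter.mpr ⟨Nat.mem_divisors.mpr ⟨(hf.1 0).1, hn⟩, (hf.1 0).2⟩)]
  refine Finset.sum_congr rfl fun d hd => ?_
  obtain ⟨hdvd, hd1⟩ := Finset.mem_filter.mp hd
  rw [Nat.mem_divisors] at hdvd
  have hdvd' := hdvd.1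
  have hd0 : d ≠ 0 := by omega
  have hnd0 : n / d ≠ 0 := Nat.div_ne_zero_iff_of_dvd hdvd' |>.mpr ⟨hn, hd0⟩
  rw [dstar_eq_card _ _ hnd0]
  refine Finset.card_bij' (fun f _ => Fin.tail f) (fun g _ => Fin.cons d g) ?hi ?hj ?li ?ri
  case hi =>
    intro f hf
    obtain ⟨hf, hf0⟩ := Finset.mem_filter.mp hf
    rw [mem_dstarFinset hn] at hf
    obtain ⟨h1, h2⟩ := hf
    have hprod : f 0 * ∏ i : Fin ℓ, Fin.tail f i = n := by
      rw [← h2, Fin.prod_univ_succ]; rfl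
    rw [hf0] at hprod
    have htail : ∏ i : Fin ℓ, Fin.tail f i = n / d := by
      rw [← hprod, Nat.mul_div_cancel_left _ (by omega)]
    rw [mem_dstarFinset hnd0]
    refine ⟨fun i => ⟨?_, (h1 i.succ).2⟩, htail⟩
    · rw [← htail]
      exact Finset.dvd_prod_of_mem _ (Finset.mem_univ i)
  case hj =>
    intro g hg
    rw [mem_dstarFinset hnd0] at hg
    obtain ⟨h1, h2⟩ := hg
    refine Finset.mem_filter.mpr ⟨?_, by simp⟩
    rw [mem_dstarFinset hn]
    constructor
    · intro i
      refine Fin.cases ?_ ?_ i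
      · simpa using ⟨hdvd', hd1⟩
      · intro j
        simpa using ⟨(h1 j).1.trans (Nat.div_dvd_of_dvd hdvd'), (h1 j).2⟩
    · rw [Fin.prod_univ_succ]
      simp [h2, Nat.mul_div_cancel' hdvd']
  case li =>
    intro f hf
    obtain ⟨-, hf0⟩ := Finset.mem_filter.mp hf
    subst hf0
    exact Fin.cons_self_tail f
  case ri =>
    intro g hg
    simp

lemma sum_moebius_divisors (n : ℕ) (hn : n ≠ 0) :
    ∑ d ∈ n.divisors, ArithmeticFunction.moebius d
      = if n = 1 then 1 else 0 := by
  have h := congrArg (fun f : ArithmeticFunction ℤ => f n)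
    ArithmeticFunction.coe_zeta_mul_moebius
  simp only [ArithmeticFunction.coe_zeta_mul_apply, ArithmeticFunction.one_apply] at h
  exact h

/-- `∑_{ℓ ≥ 0} (-1)^ℓ d_ℓ*(n) = μ(n)`; the sum is finite since `d_ℓ*(n) = 0`
for `ℓ > Ω(n) `, in particular for `ℓ > n`. -/
theorem alternating_sum_dstar_eq_moebius (n : ℕ) (hn : 1 ≤ n) :
    ∑ ℓ ∈ Finset.range (n + 1), ((-1 : ℤ) ^ ℓ * dstar ℓ n)
      = ArithmeticFunction.moebius n := by
  induction n using Nat.strong_induction_on with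
  | _ n IH =>
  have hn0 : n ≠ 0 := by omega
  rw [Finset.sum_range_succ']
  simp only [pow_zero, one_mul, pow_succ]
  rw [dstar_zero]
  have hrec : ∀ ℓ ∈ Finset.range n, ((-1:ℤ) ^ ℓ * -1 * dstar (ℓ+1) n)
      = -∑ d ∈ n.divisors.filter (fun d => 1 < d), ((-1:ℤ)^ℓ * dstar ℓ (n/d)) := by
    intro ℓ _
    rw [dstar_succ ℓ n hn0, ← Finset.sum_neg_distrib, Nat.cast_sum, Finset.mul_sum]
    refine Finset.sum_congr rfl fun d hd => by ring
  rw [Finset.sum_congr rfl hrec, Finset.sum_neg_distrib, Finset.sum_comm]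
  have hmain : ∀ d ∈ n.divisors.filter (fun d => 1 < d),
      ∑ ℓ ∈ Finset.range n, ((-1:ℤ)^ℓ * dstar ℓ (n/d))
        = ArithmeticFunction.moebius (n / d) := by
    intro d hd
    obtain ⟨hdvd, hd1⟩ := Finset.mem_filter.mp hd
    rw [Nat.mem_divisors] at hdvd
    have hdvd' := hdvd.1
    have hnd1 : 1 ≤ n / d := Nat.one_le_div_iff (by omega) |>.mpr (Nat.le_of_dvd (by omega) hdvd')
    have hndlt : n / d < n := Nat.div_lt_self (by omega) hd1
    rw [← IH (n/d) hndlt hnd1]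
    refine (Finset.sum_subset ?_ ?_).symm
    · exact Finset.range_subset_range.mpr (by omega)
    · intro ℓ _ hℓ
      rw [Finset.mem_range, not_lt] at hℓ
      rw [dstar_eq_zero_of_le hnd1 (by omega)]
      simp
  rw [Finset.sum_congr rfl hmain]
  rcases eq_or_lt_of_le hn with h1 | h1
  · simp [← h1, Nat.divisors_one, Finset.filter_singleton]
  · -- n ≥ 2
    have hne1 : n ≠ 1 := by omega
    have h1mem : (1 : ℕ) ∈ n.divisors := Nat.one_mem_divisors.mpr hn0
    have hfilter : n.divisors.filter (fun d => 1 < d) = n.divisors.erase 1 := by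
      ext d
      simp only [Finset.mem_filter, Finset.mem_erase, Nat.mem_divisors]
      constructor
      · rintro ⟨⟨h, h'⟩, h2⟩; exact ⟨by omega, h, h'⟩
      · rintro ⟨h2, h, h'⟩
        have hd0 : d ≠ 0 := by rintro rfl; exact hn0 (Nat.eq_zero_of_zero_dvd h)
        exact ⟨⟨h, h'⟩, by omega⟩
    rw [hfilter]
    have hsum : ∑ d ∈ n.divisors, ArithmeticFunction.moebius (n / d)
        = ∑ d ∈ n.divisors, ArithmeticFunction.moebius d :=
      Nat.sum_div_divisors n _
    have hsplit := Finset.add_sum_erase _ (fun d => ArithmeticFunction.moebius (n / d)) h1mem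
    rw [hsum, sum_moebius_divisors n hn0, if_neg hne1] at hsplit
    simp only [Nat.div_one] at hsplit
    rw [if_neg hne1]
    push_cast
    linarith
end
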